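/- For every group Q there exist a group G, a subgroup H₀ of G, and a normal subgroup K of H₀, such that K is co-amenable in G and the quotient group H₀/K is isomorphic to Q. -/

import Mathlib

/-- The space ℓ∞(X) of bounded real-valued functions on `X`,
as a submodule of `X → ℝ`. -/
def BddFns (X : Type*) : Submodule ℝ (X → ℝ) where
  carrier := {f | ∃ C : ℝ, ∀ x, |f x| ≤ C}
  add_mem' := by
    rintro f g ⟨C, hC⟩ ⟨D, hD⟩
    exact ⟨C + D, fun x => (abs_add_le _ _).trans (add_le_add (hC x) (hD x))⟩
  zero_mem' := ⟨0, fun x => by simp⟩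
  smul_mem' := by
    rintro c f ⟨C, hC⟩
    exact ⟨|c| * C, fun x => by
      simp only [Pi.smul_apply, smul_eq_mul, abs_mul]
      exact mul_le_mul_of_nonneg_left (hC x) (abs_nonneg c)⟩

/-- Left translation of a function on a `G`-set: `(g · f)(x) = f (g⁻¹ • x)`. -/
def lshift {G X : Type*} [Group G] [MulAction G X] (g : G) (f : X → ℝ) : X → ℝ :=
  fun x => f (g⁻¹ • x)

lemma lshift_mem {G X : Type*} [Group G] [MulAction G X] (g : G) {f : X → ℝ}
    (hf : f ∈ BddFns X) : lshift g f ∈ BddFns X := by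
  obtain ⟨C, hC⟩ := hf
  exact ⟨C, fun x => hC _⟩

/-- A `G`-invariant mean on ℓ∞(X): a linear functional `m` with `m 1 = 1`,
`m f ≥ 0` for `f ≥ 0` pointwise, invariant under the `G`-action. -/
structure InvariantMean (G : Type*) (X : Type*) [Group G] [MulAction G X] where
  toFun : (BddFns X) →ₗ[ℝ] ℝ
  norm_one : toFun ⟨(fun _ => 1), ⟨1, fun _ => by norm_num⟩⟩ = 1
  nonneg : ∀ f : BddFns X, (∀ x, 0 ≤ (f : X → ℝ) x) → 0 ≤ toFun f
  invariant : ∀ (g : G) (f : BddFns X),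
    toFun ⟨lshift g (f : X → ℝ), lshift_mem g f.2⟩ = toFun f

/-- A subgroup `H ≤ G` is co-amenable in `G` if there is a `G`-invariant mean
on ℓ∞(G/H), where `G/H` is the left coset space. -/
def Subgroup.Coamenable {G : Type*} [Group G] (H : Subgroup G) : Prop :=
  Nonempty (InvariantMean G (G ⧸ H))

/-- A group is amenable if there is a left-translation-invariant mean on ℓ∞(G). -/
def AmenableGroup (G : Type*) [Group G] : Prop :=
  Nonempty (InvariantMean G G)


open Filter Topology

-- ULTRAFILTER LIMIT LAYER
open Classical in
noncomputable def ULIM (a : ℕ → ℝ) : ℝ :=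
  if h : ∃ x, Tendsto a (Filter.hyperfilter ℕ : Filter ℕ) (𝓝 x) then h.choose else 0

lemma ULIM_spec {a : ℕ → ℝ} (h : ∃ C, ∀ n, |a n| ≤ C) :
    Tendsto a (Filter.hyperfilter ℕ : Filter ℕ) (𝓝 (ULIM a)) := by
  obtain ⟨C, hC⟩ := h
  have hle : ((Filter.hyperfilter ℕ : Ultrafilter ℕ).map a : Filter ℝ) ≤ 𝓟 (Set.Icc (-C) C) := by
    refine le_principal_iff.2 ?_
    refine Filter.mem_map.2 (Filter.univ_mem' fun n => ?_)
    exact ⟨neg_le_of_abs_le (hC n), le_of_abs_le (hC n)⟩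
  obtain ⟨x, -, hx⟩ := isCompact_Icc.ultrafilter_le_nhds _ hle
  have hex : ∃ x, Tendsto a (Filter.hyperfilter ℕ : Filter ℕ) (𝓝 x) := ⟨x, hx⟩
  unfold ULIM
  rw [dif_pos hex]

  exact hex.choose_spec

lemma ULIM_eq {a : ℕ → ℝ} {x : ℝ} (h : ∃ C, ∀ n, |a n| ≤ C)
    (hx : Tendsto a (Filter.hyperfilter ℕ : Filter ℕ) (𝓝 x)) : ULIM a = x :=
  tendsto_nhds_unique (ULIM_spec h) hx

lemma ULIM_const (c : ℝ) : ULIM (fun _ => c) = c :=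
  ULIM_eq ⟨|c|, fun _ => le_refl _⟩ tendsto_const_nhds

lemma ULIM_add {a b : ℕ → ℝ} (ha : ∃ C, ∀ n, |a n| ≤ C) (hb : ∃ C, ∀ n, |b n| ≤ C) :
    ULIM (a + b) = ULIM a + ULIM b := by
  obtain ⟨C, hC⟩ := ha; obtain ⟨D, hD⟩ := hb
  refine ULIM_eq ⟨C + D, fun n => (abs_add_le _ _).trans (add_le_add (hC n) (hD n))⟩ ?_
  exact (ULIM_spec ⟨C, hC⟩).add (ULIM_spec ⟨D, hD⟩)

lemma ULIM_smul {a : ℕ → ℝ} (c : ℝ) (ha : ∃ C, ∀ n, |a n| ≤ C) :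
    ULIM (fun n => c * a n) = c * ULIM a := by
  obtain ⟨C, hC⟩ := ha
  refine ULIM_eq ⟨|c| * C, fun n => by
    rw [abs_mul]; exact mul_le_mul_of_nonneg_left (hC n) (abs_nonneg c)⟩ ?_
  exact (ULIM_spec ⟨C, hC⟩).const_mul c

lemma ULIM_nonneg {a : ℕ → ℝ} (ha : ∃ C, ∀ n, |a n| ≤ C) (h : ∀ n, 0 ≤ a n) :
    0 ≤ ULIM a :=
  ge_of_tendsto (ULIM_spec ha) (Filter.Eventually.of_forall h)

lemma ULIM_eq_of_sub_tendsto {a b : ℕ → ℝ} (ha : ∃ C, ∀ n, |a n| ≤ C)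
    (hb : ∃ C, ∀ n, |b n| ≤ C) (h : Tendsto (fun n => a n - b n) atTop (𝓝 0)) :
    ULIM a = ULIM b := by
  have h' : Tendsto (fun n => a n - b n) (Filter.hyperfilter ℕ : Filter ℕ) (𝓝 0) :=
    h.mono_left (by rw [← Nat.cofinite_eq_atTop]; exact Filter.hyperfilter_le_cofinite)
  refine ULIM_eq ha ?_
  have := (ULIM_spec hb).add h'
  simpa using this

-- CESARO LAYER
noncomputable def cesaro (u : ℕ → ℝ) : ℕ → ℝ :=
  fun N => (∑ n ∈ Finset.range (N + 1), u n) / (N + 1)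

lemma cesaro_bdd {u : ℕ → ℝ} {C : ℝ} (hu : ∀ n, |u n| ≤ C) : ∀ N, |cesaro u N| ≤ C := by
  intro N
  have h1 : |∑ n ∈ Finset.range (N + 1), u n| ≤ (N + 1) * C := by
    calc |∑ n ∈ Finset.range (N + 1), u n| ≤ ∑ n ∈ Finset.range (N + 1), |u n| :=
          Finset.abs_sum_le_sum_abs _ _
      _ ≤ ∑ _n ∈ Finset.range (N + 1), C := Finset.sum_le_sum fun n _ => hu n
      _ = (N + 1) * C := by rw [Finset.sum_const, Finset.card_range]; push_cast; ring
  have hpos : (0:ℝ) < N + 1 := by positivity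
  rw [cesaro, abs_div, abs_of_pos hpos, div_le_iff₀ hpos]
  linarith [h1]

lemma cesaro_tendsto_zero {d : ℕ → ℝ} {D : ℝ}
    (h : ∀ N, |∑ n ∈ Finset.range N, d n| ≤ D) :
    Tendsto (cesaro d) atTop (𝓝 0) := by
  apply squeeze_zero_norm (a := fun N : ℕ => D / (N + 1))
  · intro N
    have hpos : (0:ℝ) < N + 1 := by positivity
    rw [Real.norm_eq_abs, cesaro, abs_div, abs_of_pos hpos]
    gcongr
    exact h _
  · exact tendsto_const_nhds.div_atTop (tendsto_atTop_add_const_right _ _ tendsto_natCast_atTop_atTop)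

-- ABSTRACT MEAN CONSTRUCTION
section AbstractMean

variable {G X : Type*} [Group G] [MulAction G X]

lemma lshift_mul (g h : G) (f : X → ℝ) : lshift (g * h) f = lshift g (lshift h f) := by
  funext x
  simp [lshift, mul_smul]

lemma lshift_one (f : X → ℝ) : lshift (1 : G) f = f := by
  funext x
  simp [lshift]

noncomputable def seqAvg (p : ℕ → X) (f : X → ℝ) : ℕ → ℝ :=
  cesaro (fun n => f (p n))

lemma seqAvg_bdd (p : ℕ → X) {f : X → ℝ} (hf : f ∈ BddFns X) :
    ∃ C, ∀ N, |seqAvg p f N| ≤ C := by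
  obtain ⟨C, hC⟩ := hf
  exact ⟨C, cesaro_bdd fun n => hC _⟩

theorem invariantMean_of_seq (p : ℕ → X) (S : Set G) (hS : Subgroup.closure S = ⊤)
    (hp : ∀ g ∈ S, (∀ᶠ n in Filter.atTop, g⁻¹ • p n = p n) ∨ (∀ n, g⁻¹ • p n = p (n + 1))) :
    Nonempty (InvariantMean G X) := by
  -- the mean
  set m : (X → ℝ) → ℝ := fun f => ULIM (seqAvg p f) with hm
  have hbdd : ∀ f : BddFns X, ∃ C, ∀ N, |seqAvg p (f : X → ℝ) N| ≤ C :=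
    fun f => seqAvg_bdd p f.2
  -- key invariance for generators
  have key : ∀ g : G, (∀ f : X → ℝ, f ∈ BddFns X → m (lshift g f) = m f) := by
    have main : ∀ g ∈ Subgroup.closure S, ∀ f : X → ℝ, f ∈ BddFns X → m (lshift g f) = m f := by
      intro g hg
      induction hg using Subgroup.closure_induction with
      | mem x hx =>
        intro f hf
        obtain ⟨C, hC⟩ := hf
        set u : ℕ → ℝ := fun n => f (p n) with hu
        set v : ℕ → ℝ := fun n => f (x⁻¹ • p n) with hv
        have hveq : seqAvg p (lshift x f) = cesaro v := rfl
        have hbd : ∃ D, ∀ N, |∑ n ∈ Finset.range N, (v n - u n)| ≤ D := by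
          rcases hp x hx with hcase | hcase
          · obtain ⟨n₀, hn₀⟩ := Filter.eventually_atTop.1 hcase
            refine ⟨∑ n ∈ Finset.range n₀, |v n - u n|, fun N => ?_⟩
            calc |∑ n ∈ Finset.range N, (v n - u n)| ≤ ∑ n ∈ Finset.range N, |v n - u n| :=
                  Finset.abs_sum_le_sum_abs _ _
              _ ≤ ∑ n ∈ Finset.range (max N n₀), |v n - u n| :=
                  Finset.sum_le_sum_of_subset_of_nonneg
                    (Finset.range_subset_range.2 (le_max_left _ _)) (fun _ _ _ => abs_nonneg _)
              _ = ∑ n ∈ Finset.range n₀, |v n - u n| := by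
                  refine (Finset.sum_subset (Finset.range_subset_range.2 (le_max_right _ _))
                    fun n _ hn => ?_).symm
                  have : n₀ ≤ n := le_of_not_gt (fun h => hn (Finset.mem_range.2 h))
                  have : v n = u n := by rw [hv, hu]; simp only []; rw [hn₀ n this]
                  simp [this]
          · refine ⟨2 * C, fun N => ?_⟩
            have hvu : ∀ n, v n = u (n + 1) := fun n => by
              rw [hv, hu]; simp only []; rw [hcase n]
            have : ∑ n ∈ Finset.range N, (v n - u n) = u N - u 0 := by
              rw [show (fun n => v n - u n) = fun n => u (n+1) - u n from funext fun n => by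
                rw [hvu n]] at *
              exact Finset.sum_range_sub u N
            rw [this]
            calc |u N - u 0| ≤ |u N| + |u 0| := abs_sub _ _
              _ ≤ C + C := add_le_add (hC _) (hC _)
              _ = 2 * C := by ring
        obtain ⟨D, hD⟩ := hbd
        have htend : Filter.Tendsto (fun N => seqAvg p (lshift x f) N - seqAvg p f N)
            Filter.atTop (𝓝 0) := by
          have : (fun N => seqAvg p (lshift x f) N - seqAvg p f N)
              = cesaro (fun n => v n - u n) := by
            funext N
            simp only [seqAvg, cesaro]
            rw [div_sub_div_same, ← Finset.sum_sub_distrib]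
            rfl
          rw [this]
          exact cesaro_tendsto_zero hD
        exact ULIM_eq_of_sub_tendsto (seqAvg_bdd p (lshift_mem x ⟨C, hC⟩)) (seqAvg_bdd p ⟨C, hC⟩) htend
      | one =>
        intro f hf
        rw [lshift_one]
      | mul x y hx hy ihx ihy =>
        intro f hf
        rw [lshift_mul]
        rw [ihx _ (lshift_mem y hf), ihy _ hf]
      | inv x hx ih =>
        intro f hf
        have h1 : m (lshift x (lshift x⁻¹ f)) = m (lshift x⁻¹ f) :=
          ih _ (lshift_mem x⁻¹ hf)
        rw [← lshift_mul, mul_inv_cancel, lshift_one] at h1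
        exact h1.symm
    intro g
    exact main g (hS ▸ Subgroup.mem_top g)
  refine ⟨⟨⟨⟨fun f => m (f : X → ℝ), ?_⟩, ?_⟩, ?_, ?_, ?_⟩⟩
  · -- map_add
    intro f g
    have : seqAvg p ((f + g : BddFns X) : X → ℝ) = seqAvg p (f : X → ℝ) + seqAvg p (g : X → ℝ) := by
      funext N
      simp only [seqAvg, cesaro, Pi.add_apply]
      rw [← add_div, ← Finset.sum_add_distrib]
      rfl
    show ULIM _ = _
    rw [this]
    exact ULIM_add (hbdd f) (hbdd g)
  · -- map_smul
    intro c f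
    have : seqAvg p ((c • f : BddFns X) : X → ℝ) = fun N => c * seqAvg p (f : X → ℝ) N := by
      funext N
      simp only [seqAvg, cesaro]
      rw [show ∑ n ∈ Finset.range (N+1), ((c • f : BddFns X) : X → ℝ) (p n)
        = c * ∑ n ∈ Finset.range (N+1), (f : X → ℝ) (p n) by
          rw [Finset.mul_sum]; rfl]
      ring
    show ULIM _ = _
    rw [this, ULIM_smul c (hbdd f)]
    rfl
  · -- norm_one
    show ULIM _ = 1
    have : seqAvg p (fun _ => (1:ℝ)) = fun _ => (1:ℝ) := by
      funext N
      simp only [seqAvg, cesaro]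
      rw [Finset.sum_const, Finset.card_range]
      field_simp
      simp
    rw [this, ULIM_const]
  · -- nonneg
    intro f hf
    exact ULIM_nonneg (hbdd f) fun N => by
      simp only [seqAvg, cesaro]
      apply div_nonneg
      · exact Finset.sum_nonneg fun n _ => hf _
      · positivity
  · -- invariant
    intro g f
    exact key g (f : X → ℝ) f.2

end AbstractMean

-- GROUP CONSTRUCTION
section Construction

universe u
variable (Q : Type u) [Group Q]

/-- Restricted direct product ⊕_ℤ Q, as a subgroup of ℤ → Q. -/
def BG : Subgroup (ℤ → Q) where
  carrier := {f | (Function.mulSupport f).Finite}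
  one_mem' := by
    show (Function.mulSupport fun _ : ℤ => (1:Q)).Finite
    rw [Function.mulSupport_fun_one]
    exact Set.finite_empty
  mul_mem' := fun hf hg => ((hf.union hg).subset (Function.mulSupport_mul _ _))
  inv_mem' := fun {f} hf => by
    show (Function.mulSupport fun x => (f x)⁻¹).Finite
    rw [Function.mulSupport_fun_inv]
    exact hf

lemma shift_support {b : ℤ → Q} (hb : (Function.mulSupport b).Finite) (m : ℤ) :
    (Function.mulSupport fun x => b (x + m)).Finite := by
  have he : (Function.mulSupport fun x => b (x + m)) = (fun x => x + m) ⁻¹' Function.mulSupport b := rfl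
  rw [he]
  exact hb.preimage ((add_left_injective m).injOn)

/-- Shift automorphism of `BG Q`. -/
def shiftB (m : ℤ) : BG Q ≃* BG Q where
  toFun b := ⟨fun x => b.1 (x + m), shift_support Q b.2 m⟩
  invFun b := ⟨fun x => b.1 (x + -m), shift_support Q b.2 (-m)⟩
  left_inv b := by ext x; simp
  right_inv b := by ext x; simp
  map_mul' a b := rfl

/-- Shift action of ℤ on `BG Q`. -/
def shiftHom : Multiplicative ℤ →* MulAut (BG Q) where
  toFun m := shiftB Q (Multiplicative.toAdd m)
  map_one' := by
    apply MulEquiv.ext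
    intro b
    ext x
    show b.1 (x + 0) = b.1 x
    rw [add_zero]
  map_mul' a b := by
    apply MulEquiv.ext
    intro c
    ext x
    show c.1 (x + Multiplicative.toAdd (a * b)) = c.1 (x + Multiplicative.toAdd a + Multiplicative.toAdd b)
    congr 1
    rw [toAdd_mul]
    ring

/-- The wreath-type group `(⊕_ℤ Q) ⋊ ℤ`. -/
abbrev GG := BG Q ⋊[shiftHom Q] Multiplicative ℤ

/-- Evaluation at 0. -/
def eval0 : BG Q →* Q := (Pi.evalMonoidHom (fun _ : ℤ => Q) 0).comp (BG Q).subtype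

lemma eval0_surjective : Function.Surjective (eval0 Q) := by
  intro q
  classical
  refine ⟨⟨Pi.mulSingle (0:ℤ) q, (Set.finite_singleton 0).subset Pi.mulSupport_mulSingle_subset⟩, ?_⟩
  simp [eval0]

def KK : Subgroup (GG Q) := (eval0 Q).ker.map SemidirectProduct.inl

def HH : Subgroup (GG Q) := (SemidirectProduct.inl : BG Q →* GG Q).range

lemma KK_le_HH : KK Q ≤ HH Q := by
  rintro x hx
  obtain ⟨b, -, rfl⟩ := Subgroup.mem_map.1 hx
  exact ⟨b, rfl⟩

/-- The distinguished element `t` (generator of the ℤ factor). -/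
def tt : GG Q := SemidirectProduct.inr (Multiplicative.ofAdd 1)

lemma tt_pow (n : ℕ) : (tt Q) ^ n = SemidirectProduct.inr (Multiplicative.ofAdd (n : ℤ)) := by
  rw [tt, ← map_pow]
  congr 1
  rw [← ofAdd_nsmul]
  norm_num

lemma inl_mem_KK_iff (b : BG Q) : SemidirectProduct.inl b ∈ KK Q ↔ b ∈ (eval0 Q).ker := by
  constructor
  · rintro hb
    obtain ⟨c, hc, hcb⟩ := Subgroup.mem_map.1 hb
    rwa [SemidirectProduct.inl_injective hcb] at hc
  · intro hb
    exact Subgroup.mem_map.2 ⟨b, hb, rfl⟩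

end Construction

section Construction2

universe u
variable (Q : Type u) [Group Q]

open SemidirectProduct Filter

def genS : Set (GG Q) := Set.range (inl : BG Q →* GG Q) ∪ {(tt Q)⁻¹}

lemma closure_genS : Subgroup.closure (genS Q) = ⊤ := by
  rw [eq_top_iff]
  intro g _
  have hinl : ∀ b : BG Q, (inl b : GG Q) ∈ Subgroup.closure (genS Q) := fun b =>
    Subgroup.subset_closure (Or.inl ⟨b, rfl⟩)
  have htt : tt Q ∈ Subgroup.closure (genS Q) := by
    have hmem : (tt Q)⁻¹ ∈ genS Q := Set.mem_union_right _ rfl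
    have h := Subgroup.inv_mem _ (Subgroup.subset_closure hmem)
    rwa [inv_inv] at h
  have hinr : ∀ z : Multiplicative ℤ, (inr z : GG Q) ∈ Subgroup.closure (genS Q) := by
    intro z
    have h1 : (inr z : GG Q) = tt Q ^ (Multiplicative.toAdd z) := by
      rw [tt, ← map_zpow]
      congr 1
      rw [← ofAdd_zsmul, smul_eq_mul, mul_one]
      rfl
    rw [h1]
    exact Subgroup.zpow_mem _ htt _
  have : g = inl g.left * inr g.right := (inl_left_mul_inr_right g).symm
  rw [this]
  exact Subgroup.mul_mem _ (hinl _) (hinr _)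

noncomputable def pt : ℕ → GG Q ⧸ KK Q := fun n => ↑(tt Q ^ n)

lemma eval0_shift (m : ℤ) (c : BG Q) :
    eval0 Q ((shiftHom Q) (Multiplicative.ofAdd m) c) = c.1 m := by
  show c.1 (0 + Multiplicative.toAdd (Multiplicative.ofAdd m)) = c.1 m
  simp

lemma case_inl (b : BG Q) : ∀ᶠ n in atTop, (inl b : GG Q)⁻¹ • pt Q n = pt Q n := by
  have hfin : {n : ℕ | b.1 (-(n:ℤ)) ≠ 1}.Finite := by
    have hinj : Function.Injective (fun n : ℕ => -(n:ℤ)) := by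
      intro a b h
      simpa using h
    exact b.2.preimage hinj.injOn
  have hev : ∀ᶠ n : ℕ in atTop, b.1 (-(n:ℤ)) = 1 := by
    have h := hfin.eventually_cofinite_notMem
    rw [Nat.cofinite_eq_atTop] at h
    filter_upwards [h] with n hn
    simpa using hn
  filter_upwards [hev] with n hn
  show (inl b : GG Q)⁻¹ • (↑(tt Q ^ n) : GG Q ⧸ KK Q) = ↑(tt Q ^ n)
  have h0 : (inl b : GG Q)⁻¹ • (↑(tt Q ^ n) : GG Q ⧸ KK Q)
      = (QuotientGroup.mk ((inl b : GG Q)⁻¹ * tt Q ^ n) : GG Q ⧸ KK Q) := rfl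
  rw [h0, QuotientGroup.eq, mul_inv_rev, inv_inv, mul_assoc, tt_pow]
  rw [show ((inr (Multiplicative.ofAdd (n:ℤ)) : GG Q))⁻¹ *
        (inl b * inr (Multiplicative.ofAdd (n:ℤ)))
      = inl ((shiftHom Q) (Multiplicative.ofAdd (n:ℤ))⁻¹ b) from by
    rw [inl_aut, inv_inv, map_inv, mul_assoc]]
  rw [inl_mem_KK_iff, MonoidHom.mem_ker, ← ofAdd_neg, eval0_shift]
  exact hn

lemma case_tt (n : ℕ) : ((tt Q)⁻¹)⁻¹ • pt Q n = pt Q (n + 1) := by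
  rw [inv_inv]
  show (↑(tt Q * tt Q ^ n) : GG Q ⧸ KK Q) = ↑(tt Q ^ (n + 1))
  rw [← pow_succ']

theorem KK_coamenable : (KK Q).Coamenable := by
  refine invariantMean_of_seq (pt Q) (genS Q) (closure_genS Q) ?_
  rintro g (⟨b, rfl⟩ | rfl)
  · exact Or.inl (case_inl Q b)
  · exact Or.inr (case_tt Q)

end Construction2

section Final

universe u
variable (Q : Type u) [Group Q]

open SemidirectProduct

noncomputable def eIso : BG Q ≃* HH Q := MonoidHom.ofInjective inl_injective

noncomputable def phiH : HH Q →* Q := (eval0 Q).comp (eIso Q).symm.toMonoidHom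

lemma phiH_surjective : Function.Surjective (phiH Q) :=
  (eval0_surjective Q).comp (eIso Q).symm.surjective

lemma inl_eIso_symm (x : HH Q) : (inl ((eIso Q).symm x) : GG Q) = ↑x := by
  have h2 : (((eIso Q) ((eIso Q).symm x) : HH Q) : GG Q) = ↑x := by
    rw [(eIso Q).apply_symm_apply]
  rw [← h2]
  exact (MonoidHom.ofInjective_apply inl_injective).symm

lemma ker_phiH : (phiH Q).ker = (KK Q).subgroupOf (HH Q) := by
  ext x
  rw [MonoidHom.mem_ker, Subgroup.mem_subgroupOf]
  constructor
  · intro hx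
    have h1 : (eIso Q).symm x ∈ (eval0 Q).ker := hx
    have h2 : (inl ((eIso Q).symm x) : GG Q) ∈ KK Q := Subgroup.mem_map.2 ⟨_, h1, rfl⟩
    rwa [inl_eIso_symm] at h2
  · intro hx
    obtain ⟨c, hc, hcx⟩ := Subgroup.mem_map.1 hx
    have hce : c = (eIso Q).symm x := inl_injective (by rw [hcx, inl_eIso_symm])
    show eval0 Q ((eIso Q).symm x) = 1
    rw [← hce]
    exact hc

end Final


/-- For any group `Q` there is a triple `K ⊴ H₀ ≤ G` with `K` co-amenable in `G`
and `H₀/K ≅ Q` (expressed via a surjective homomorphism `H₀ →* Q` with kernel `K`). -/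
theorem exists_coamenable_with_quotient (Q : Type u) [Group Q] :
    ∃ (G : GrpCat.{u}) (H₀ K : Subgroup G) (φ : H₀ →* Q),
      K ≤ H₀ ∧ K.Coamenable ∧
      Function.Surjective φ ∧ φ.ker = K.subgroupOf H₀ :=
  ⟨GrpCat.of (GG Q), HH Q, KK Q, phiH Q, KK_le_HH Q, KK_coamenable Q,
    phiH_surjective Q, ker_phiH Q⟩
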